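/- Let Ω be a locally compact Hausdorff space with no isolated points, and let T : C₀(Ω) → C₀(Ω) be a ℂ-linear map (not assumed continuous) such that f·g = 0 implies T(f)·g = 0 for all f, g ∈ C₀(Ω). Then T is bounded, and there exists a bounded continuous function h ∈ C_b(Ω) with T(f) = h·f for all f ∈ C₀(Ω). -/

import Mathlib

open ZeroAtInfty BoundedContinuousFunction Topology Filter Set

set_option linter.unusedSectionVars false
set_option maxHeartbeats 1000000

section Aux
variable {Ω : Type*} [TopologicalSpace Ω] [LocallyCompactSpace Ω] [T2Space Ω]

lemma my_norm_apply_le (f : C₀(Ω, ℂ)) (x : Ω) : ‖f x‖ ≤ ‖f‖ := by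
  rw [← ZeroAtInftyContinuousMap.norm_toBCF_eq_norm]
  exact f.toBCF.norm_coe_le_norm x

lemma my_norm_le {f : C₀(Ω, ℂ)} {C : ℝ} (h0 : 0 ≤ C) (h : ∀ x, ‖f x‖ ≤ C) : ‖f‖ ≤ C := by
  rw [← ZeroAtInftyContinuousMap.norm_toBCF_eq_norm]
  exact (BoundedContinuousFunction.norm_le h0).mpr h

lemma my_bump {x : Ω} {V : Set Ω} (hV : IsOpen V) (hx : x ∈ V) :
    ∃ (K : Set Ω) (φ : C₀(Ω, ℂ)), IsCompact K ∧ K ⊆ V ∧ tsupport ⇑φ ⊆ K ∧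
      (∃ W : Set Ω, IsOpen W ∧ x ∈ W ∧ W ⊆ K ∧ ∀ y ∈ W, φ y = 1) ∧ (∀ y, ‖φ y‖ ≤ 1) := by
  obtain ⟨K, hK, hxK, hKV⟩ := exists_compact_subset hV hx
  obtain ⟨K', hK', hxK', hK'K⟩ := exists_compact_subset isOpen_interior hxK
  obtain ⟨φ₀, hφ1, hφ0, hφc, hφi⟩ := exists_continuous_one_zero_of_isCompact hK'
    isOpen_interior.isClosed_compl (disjoint_compl_right_iff_subset.mpr hK'K)
  have hcont : Continuous fun y => ((φ₀ y : ℝ) : ℂ) :=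
    Complex.continuous_ofReal.comp φ₀.continuous
  have hz : Tendsto (fun y => ((φ₀ y : ℝ) : ℂ)) (cocompact Ω) (𝓝 0) := by
    have := hφc.is_zero_at_infty
    have h2 := (Complex.continuous_ofReal.tendsto 0).comp this
    simpa [Function.comp_def] using h2
  refine ⟨K, ⟨⟨fun y => ((φ₀ y : ℝ) : ℂ), hcont⟩, hz⟩, hK, hKV, ?_, ?_, ?_⟩
  · have hsupp : Function.support (fun y => ((φ₀ y : ℝ) : ℂ)) ⊆ interior K := by
      intro y hy
      by_contra hyK
      exact hy (by simp [hφ0 hyK])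
    calc tsupport (fun y => ((φ₀ y : ℝ) : ℂ)) ⊆ closure (interior K) :=
          closure_mono hsupp
      _ ⊆ K := closure_minimal interior_subset hK.isClosed
  · exact ⟨interior K', isOpen_interior, hxK', interior_subset.trans (hK'K.trans interior_subset),
      fun y hy => by simp [hφ1 (interior_subset hy)]⟩
  · intro y
    simp only [ZeroAtInftyContinuousMap.coe_mk]
    rw [Complex.norm_real]
    have := hφi y
    rw [Real.norm_eq_abs, abs_le]
    constructor <;> [linarith [this.1]; linarith [this.2]]

lemma my_loc_zero (T : C₀(Ω, ℂ) →ₗ[ℂ] C₀(Ω, ℂ))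
    (hloc : ∀ f g : C₀(Ω, ℂ), f * g = 0 → T f * g = 0)
    (f : C₀(Ω, ℂ)) {V : Set Ω} (hV : IsOpen V) (hf : ∀ y ∈ V, f y = 0) :
    ∀ x ∈ V, T f x = 0 := by
  intro x hx
  obtain ⟨K, φ, hK, hKV, hsup, ⟨W, hWo, hxW, hWK, hW1⟩, hφle⟩ := my_bump hV hx
  have hfφ : f * φ = 0 := by
    ext y
    simp only [ZeroAtInftyContinuousMap.mul_apply, ZeroAtInftyContinuousMap.zero_apply]
    rcases eq_or_ne (φ y) 0 with h | h
    · simp [h]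
    · have : y ∈ tsupport ⇑φ := subset_closure h
      rw [hf y (hKV (hsup this))]; ring
  have := hloc f φ hfφ
  have h2 : T f x * φ x = 0 := by
    have := congrArg (fun g : C₀(Ω, ℂ) => g x) this
    simpa using this
  rwa [hW1 x hxW, mul_one] at h2

lemma my_sum_apply {ι : Type*} (s : Finset ι) (g : ι → C₀(Ω, ℂ)) (y : Ω) :
    (∑ i ∈ s, g i) y = ∑ i ∈ s, g i y :=
  map_sum (AddMonoidHom.mk' (fun q : C₀(Ω, ℂ) => q y) (fun a b => rfl)) g s

lemma my_point_zero (hni : ∀ ω : Ω, (𝓝[≠] ω).NeBot)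
    (T : C₀(Ω, ℂ) →ₗ[ℂ] C₀(Ω, ℂ))
    (hloc : ∀ f g : C₀(Ω, ℂ), f * g = 0 → T f * g = 0)
    (f : C₀(Ω, ℂ)) (ω : Ω) (hf : f ω = 0) : T f ω = 0 := by
  by_contra hc
  have hcpos : 0 < ‖T f ω‖ := norm_pos_iff.mpr hc
  set c : ℝ := ‖T f ω‖ / 2 with hcdef
  have hcpos2 : 0 < c := by positivity
  set U : Set Ω := {x | c < ‖T f x‖} with hU
  have hUo : IsOpen U := isOpen_lt continuous_const ((map_continuous (T f)).norm)
  have hωU : ω ∈ U := by simp only [hU, mem_setOf_eq, hcdef]; linarith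
  -- the step existence
  have step : ∀ (n : ℕ) (C : Set Ω), IsCompact C → ω ∉ C →
      ∃ (x : Ω) (K : Set Ω) (φ : C₀(Ω, ℂ)), x ∈ U ∧ IsCompact K ∧
        (∀ y ∈ K, ‖f y‖ ≤ 1 / (n + 1) ^ 2) ∧ Disjoint K C ∧ ω ∉ K ∧
        tsupport ⇑φ ⊆ K ∧ (∃ W : Set Ω, IsOpen W ∧ x ∈ W ∧ W ⊆ K ∧ ∀ y ∈ W, φ y = 1) ∧
        (∀ y, ‖φ y‖ ≤ 1) ∧ K ⊆ U := by
    intro n C hC hωC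
    set V : Set Ω := ((U ∩ {y | ‖f y‖ < 1 / (n + 1) ^ 2}) ∩ Cᶜ) \ {ω} with hV
    have hVo : IsOpen V := (((hUo.inter (isOpen_lt (map_continuous f).norm continuous_const)).inter
      hC.isClosed.isOpen_compl)).sdiff isClosed_singleton
    have hmem : (U ∩ {y | ‖f y‖ < 1 / (n + 1) ^ 2}) ∩ Cᶜ ∈ 𝓝 ω := by
      refine (((hUo.inter (isOpen_lt (map_continuous f).norm continuous_const)).inter
        hC.isClosed.isOpen_compl)).mem_nhds ?_
      refine ⟨⟨hωU, ?_⟩, hωC⟩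
      simp only [mem_setOf_eq, hf, norm_zero]
      positivity
    have := hni ω
    obtain ⟨x, hxV⟩ : V.Nonempty := by
      have h2 : (U ∩ {y | ‖f y‖ < 1 / (n + 1) ^ 2}) ∩ Cᶜ ∩ {ω}ᶜ ∈ 𝓝[≠] ω :=
        inter_mem (mem_nhdsWithin_of_mem_nhds hmem) self_mem_nhdsWithin
      obtain ⟨x, hx⟩ := Filter.nonempty_of_mem h2
      exact ⟨x, hx.1, hx.2⟩
    obtain ⟨K, φ, hK, hKV, hsup, hWex, hφle⟩ := my_bump hVo hxV
    refine ⟨x, K, φ, hxV.1.1.1, hK, ?_, ?_, ?_, hsup, hWex, hφle, ?_⟩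
    · exact fun y hy => le_of_lt (hKV hy).1.1.2
    · exact Set.disjoint_left.mpr fun y hy => (hKV hy).1.2
    · exact fun h => (hKV h).2 rfl
    · exact fun y hy => (hKV hy).1.1.1
  -- build infinite sequence via exists_seq_of_forall_finset_exists
  set α := ℕ × Ω × Set Ω × C₀(Ω, ℂ) with hα
  set P : α → Prop := fun a => a.2.1 ∈ U ∧ IsCompact a.2.2.1 ∧
      (∀ y ∈ a.2.2.1, ‖f y‖ ≤ 1 / (a.1 + 1) ^ 2) ∧ ω ∉ a.2.2.1 ∧
      tsupport ⇑a.2.2.2 ⊆ a.2.2.1 ∧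
      (∃ W : Set Ω, IsOpen W ∧ a.2.1 ∈ W ∧ W ⊆ a.2.2.1 ∧ ∀ y ∈ W, a.2.2.2 y = 1) ∧
      (∀ y, ‖a.2.2.2 y‖ ≤ 1) ∧ a.2.2.1 ⊆ U with hP
  set r : α → α → Prop := fun a b => a.1 < b.1 ∧ Disjoint a.2.2.1 b.2.2.1 with hr
  obtain ⟨F, hFP, hFr⟩ : ∃ F : ℕ → α, (∀ n, P (F n)) ∧ ∀ m n, m < n → r (F m) (F n) := by
    apply exists_seq_of_forall_finset_exists P r
    intro s hs
    classical
    set N : ℕ := (s.sup fun a => a.1) + 1 with hN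
    set C : Set Ω := ⋃ a ∈ s, a.2.2.1 with hC
    have hCc : IsCompact C := s.finite_toSet.isCompact_biUnion fun a ha => (hs a ha).2.1
    have hωC : ω ∉ C := by
      simp only [hC, mem_iUnion]
      rintro ⟨a, ha, hmem⟩
      exact (hs a ha).2.2.2.1 hmem
    obtain ⟨x, K, φ, h1, h2, h3, h4, h5, h6, h7, h8, h9⟩ := step N C hCc hωC
    refine ⟨⟨N, x, K, φ⟩, ⟨h1, h2, h3, h5, h6, h7, h8, h9⟩, fun a ha => ⟨?_, ?_⟩⟩
    · exact Nat.lt_succ_of_le (Finset.le_sup ha)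
    · exact (h4.mono_right (subset_iUnion₂ a ha)).symm
  -- extract components
  set idx : ℕ → ℕ := fun n => (F n).1 with hidxdef
  set xx : ℕ → Ω := fun n => (F n).2.1 with hxxdef
  set KK : ℕ → Set Ω := fun n => (F n).2.2.1 with hKKdef
  set φφ : ℕ → C₀(Ω, ℂ) := fun n => (F n).2.2.2 with hφφdef
  have hPn : ∀ n, xx n ∈ U ∧ IsCompact (KK n) ∧
      (∀ y ∈ KK n, ‖f y‖ ≤ 1 / (idx n + 1) ^ 2) ∧ ω ∉ KK n ∧
      tsupport ⇑(φφ n) ⊆ KK n ∧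
      (∃ W : Set Ω, IsOpen W ∧ xx n ∈ W ∧ W ⊆ KK n ∧ ∀ y ∈ W, φφ n y = 1) ∧
      (∀ y, ‖φφ n y‖ ≤ 1) ∧ KK n ⊆ U := fun n => hFP n
  have hidxmono : StrictMono idx := fun m n h => (hFr m n h).1
  have hidxle : ∀ n, n ≤ idx n := fun n => hidxmono.le_apply
  have hdisj : ∀ m n, m ≠ n → Disjoint (KK m) (KK n) := by
    intro m n hmn
    rcases hmn.lt_or_gt with h | h
    · exact (hFr m n h).2
    · exact ((hFr n m h).2).symm
  set t : ℕ → C₀(Ω, ℂ) := fun k => ((idx k + 1 : ℕ) : ℂ) • (φφ k * f) with htdef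
  set S : ℕ → C₀(Ω, ℂ) := fun m => ∑ k ∈ Finset.range m, t k with hSdef
  have ht_apply : ∀ k y, t k y = ((idx k + 1 : ℕ) : ℂ) * (φφ k y * f y) := by
    intro k y
    simp [htdef, ZeroAtInftyContinuousMap.smul_apply, ZeroAtInftyContinuousMap.mul_apply,
      smul_eq_mul]
  have htz : ∀ k y, φφ k y = 0 → t k y = 0 := by
    intro k y h0
    rw [ht_apply, h0]; ring
  have hyKmem : ∀ k y, φφ k y ≠ 0 → y ∈ KK k := fun k y h0 =>
    (hPn k).2.2.2.2.1 (subset_closure h0)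
  have hsum_bound : ∀ a b : ℕ, a ≤ b → ‖S b - S a‖ ≤ 1 / (a + 1) := by
    intro a b hab
    have hsub : S b - S a = ∑ k ∈ Finset.Ico a b, t k := by
      simp only [hSdef]
      rw [Finset.sum_Ico_eq_sub _ hab]
    rw [hsub]
    apply my_norm_le (by positivity)
    intro y
    rw [my_sum_apply]
    by_cases hex : ∃ k ∈ Finset.Ico a b, φφ k y ≠ 0
    · obtain ⟨k₀, hk₀m, hk₀⟩ := hex
      have hyK : y ∈ KK k₀ := hyKmem k₀ y hk₀
      have hsingle : ∑ k ∈ Finset.Ico a b, t k y = t k₀ y := by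
        apply Finset.sum_eq_single_of_mem k₀ hk₀m
        intro b' hb' hne
        apply htz
        by_contra h0
        exact absurd hyK (disjoint_left.mp (hdisj b' k₀ hne) (hyKmem b' y h0))
      rw [hsingle, ht_apply]
      have hM1 : (a : ℝ) + 1 ≤ (idx k₀ : ℝ) + 1 := by
        have : a ≤ idx k₀ := le_trans (Finset.mem_Ico.mp hk₀m).1 (hidxle k₀)
        exact_mod_cast Nat.succ_le_succ this
      have hMpos : (0 : ℝ) < (idx k₀ : ℝ) + 1 := by positivity
      have hfb : ‖f y‖ ≤ 1 / ((idx k₀ : ℝ) + 1) ^ 2 := by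
        have := (hPn k₀).2.2.1 y hyK
        exact_mod_cast this
      have hφb : ‖φφ k₀ y‖ ≤ 1 := (hPn k₀).2.2.2.2.2.2.1 y
      have hφnn : 0 ≤ ‖φφ k₀ y‖ := norm_nonneg _
      have hfnn : 0 ≤ ‖f y‖ := norm_nonneg _
      calc ‖((idx k₀ + 1 : ℕ) : ℂ) * (φφ k₀ y * f y)‖
          = ((idx k₀ : ℝ) + 1) * (‖φφ k₀ y‖ * ‖f y‖) := by
            rw [norm_mul, norm_mul, Complex.norm_natCast]; push_cast; ring
        _ ≤ ((idx k₀ : ℝ) + 1) * (1 * (1 / ((idx k₀ : ℝ) + 1) ^ 2)) := by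
            apply mul_le_mul_of_nonneg_left _ (le_of_lt hMpos)
            exact mul_le_mul hφb hfb hfnn zero_le_one
        _ = 1 / ((idx k₀ : ℝ) + 1) := by field_simp
        _ ≤ 1 / ((a : ℝ) + 1) := by
            apply one_div_le_one_div_of_le (by positivity) hM1
    · push_neg at hex
      have : ∑ k ∈ Finset.Ico a b, t k y = 0 :=
        Finset.sum_eq_zero fun k hk => htz k y (hex k hk)
      rw [this, norm_zero]
      positivity
  have hcauchy : CauchySeq S := by
    apply cauchySeq_of_le_tendsto_0 (fun n : ℕ => 1 / (n + 1 : ℝ)) _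
      tendsto_one_div_add_atTop_nhds_zero_nat
    intro n m N hn hm
    rw [dist_eq_norm]
    rcases le_total n m with h | h
    · rw [norm_sub_rev]
      calc ‖S m - S n‖ ≤ 1 / ((n : ℝ) + 1) := hsum_bound n m h
        _ ≤ 1 / ((N : ℝ) + 1) := by
            apply one_div_le_one_div_of_le (by positivity)
            exact_mod_cast Nat.succ_le_succ hn
    · calc ‖S n - S m‖ ≤ 1 / ((m : ℝ) + 1) := hsum_bound m n h
        _ ≤ 1 / ((N : ℝ) + 1) := by
            apply one_div_le_one_div_of_le (by positivity)
            exact_mod_cast Nat.succ_le_succ hm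
  obtain ⟨g, hg⟩ := cauchySeq_tendsto_of_complete hcauchy
  have hpt : ∀ y, Tendsto (fun m => S m y) atTop (𝓝 (g y)) := by
    intro y
    exact ((ZeroAtInftyContinuousMap.tendsto_iff_tendstoUniformly).mp hg).tendsto_at y
  have hgK : ∀ n, ∀ y ∈ KK n, g y = t n y := by
    intro n y hy
    have hev : ∀ m, n < m → S m y = t n y := by
      intro m hm
      simp only [hSdef]
      rw [my_sum_apply]
      apply Finset.sum_eq_single_of_mem n (Finset.mem_range.mpr hm)
      intro b' hb' hne
      apply htz
      by_contra h0
      exact absurd hy (disjoint_left.mp (hdisj b' n hne) (hyKmem b' y h0))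
    refine tendsto_nhds_unique (hpt y) (tendsto_const_nhds.congr' ?_)
    exact eventually_atTop.mpr ⟨n + 1, fun m hm => (hev m hm).symm⟩
  have hbig : ∀ n : ℕ, ((n : ℝ) + 1) * c ≤ ‖T g‖ := by
    intro n
    obtain ⟨W, hWo, hxW, hWK, hW1⟩ := (hPn n).2.2.2.2.2.1
    set D : C₀(Ω, ℂ) := g - ((idx n + 1 : ℕ) : ℂ) • f with hDdef
    have hDzero : ∀ y ∈ W, D y = 0 := by
      intro y hy
      simp only [hDdef, ZeroAtInftyContinuousMap.sub_apply,
        ZeroAtInftyContinuousMap.smul_apply, smul_eq_mul]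
      rw [hgK n y (hWK hy), ht_apply, hW1 y hy]
      ring
    have hTD := my_loc_zero T hloc D hWo hDzero (xx n) hxW
    have hTD2 : T D = T g - ((idx n + 1 : ℕ) : ℂ) • T f := by
      rw [hDdef, map_sub, map_smul]
    have hTg : T g (xx n) = ((idx n + 1 : ℕ) : ℂ) * T f (xx n) := by
      rw [hTD2] at hTD
      simp only [ZeroAtInftyContinuousMap.sub_apply,
        ZeroAtInftyContinuousMap.smul_apply, smul_eq_mul] at hTD
      linear_combination hTD
    have hxU : c < ‖T f (xx n)‖ := (hPn n).1
    calc ((n : ℝ) + 1) * c ≤ ((idx n : ℝ) + 1) * c := by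
          apply mul_le_mul_of_nonneg_right _ (le_of_lt hcpos2)
          exact_mod_cast Nat.succ_le_succ (hidxle n)
      _ ≤ ((idx n : ℝ) + 1) * ‖T f (xx n)‖ := by
          apply mul_le_mul_of_nonneg_left (le_of_lt hxU) (by positivity)
      _ = ‖T g (xx n)‖ := by
          rw [hTg, norm_mul, Complex.norm_natCast]; push_cast; ring
      _ ≤ ‖T g‖ := my_norm_apply_le _ _
  obtain ⟨n, hn⟩ := exists_nat_gt (‖T g‖ / c)
  have h1 := hbig n
  rw [div_lt_iff₀ hcpos2] at hn
  nlinarith [h1, hn, hcpos2]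

noncomputable def my_ev (ω : Ω) : C₀(Ω, ℂ) →L[ℂ] ℂ :=
  LinearMap.mkContinuous
    { toFun := fun f => f ω
      map_add' := fun f g => by simp
      map_smul' := fun r f => by simp }
    1 (fun f => by simpa using my_norm_apply_le f ω)

end Aux


theorem stmt_6
    {Ω : Type*} [TopologicalSpace Ω] [LocallyCompactSpace Ω] [T2Space Ω]
    (hni : ∀ ω : Ω, (𝓝[≠] ω).NeBot)
    (T : C₀(Ω, ℂ) →ₗ[ℂ] C₀(Ω, ℂ))
    (hloc : ∀ f g : C₀(Ω, ℂ), f * g = 0 → T f * g = 0) :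
    (∃ C : ℝ, ∀ f : C₀(Ω, ℂ), ‖T f‖ ≤ C * ‖f‖) ∧
      ∃ h : Ω →ᵇ ℂ, ∀ (f : C₀(Ω, ℂ)) (ω : Ω), T f ω = h ω * f ω := by
  rcases isEmpty_or_nonempty Ω with hΩ | hΩ
  · refine ⟨⟨0, fun f => ?_⟩, 0, fun f ω => isEmptyElim ω⟩
    have : f = 0 := ZeroAtInftyContinuousMap.eq_of_empty f 0
    rw [this, map_zero, norm_zero, zero_mul]
  · have hpz := my_point_zero hni T hloc
    have he : ∀ ω : Ω, ∃ (φ : C₀(Ω, ℂ)) (W : Set Ω), IsOpen W ∧ ω ∈ W ∧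
        (∀ y ∈ W, φ y = 1) ∧ (∀ y, ‖φ y‖ ≤ 1) := by
      intro ω
      obtain ⟨K, φ, _, _, _, ⟨W, hWo, hxW, _, hW1⟩, hle⟩ := my_bump isOpen_univ (mem_univ ω)
      exact ⟨φ, W, hWo, hxW, hW1, hle⟩
    choose e W hWo hWmem hW1 hele using he
    set hfun : Ω → ℂ := fun ω => T (e ω) ω with hfundef
    have hmul : ∀ (f : C₀(Ω, ℂ)) (ω : Ω), T f ω = hfun ω * f ω := by
      intro f ω
      have h0 : (f - f ω • e ω) ω = 0 := by
        simp only [ZeroAtInftyContinuousMap.sub_apply, ZeroAtInftyContinuousMap.smul_apply,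
          smul_eq_mul]
        rw [hW1 ω ω (hWmem ω)]
        ring
      have h1 := hpz (f - f ω • e ω) ω h0
      rw [map_sub, map_smul] at h1
      simp only [ZeroAtInftyContinuousMap.sub_apply, ZeroAtInftyContinuousMap.smul_apply,
        smul_eq_mul] at h1
      simp only [hfundef]
      linear_combination h1
    have hcont : Continuous hfun := by
      rw [continuous_iff_continuousAt]
      intro ω₀
      apply ContinuousAt.congr ((map_continuous (T (e ω₀))).continuousAt)
      refine Filter.eventuallyEq_of_mem ((hWo ω₀).mem_nhds (hWmem ω₀)) ?_
      intro ω hω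
      show T (e ω₀) ω = hfun ω
      rw [hmul (e ω₀) ω, hW1 ω₀ ω hω, mul_one]
    set G : Ω → (C₀(Ω, ℂ) →L[ℂ] ℂ) := fun ω => hfun ω • my_ev ω with hGdef
    have hGf : ∀ (ω : Ω) (f : C₀(Ω, ℂ)), G ω f = T f ω := by
      intro ω f
      simp only [hGdef, ContinuousLinearMap.smul_apply, smul_eq_mul]
      rw [hmul f ω]
      rfl
    obtain ⟨C', hC'⟩ := banach_steinhaus (g := G)
      (fun f => ⟨‖T f‖, fun ω => by rw [hGf]; exact my_norm_apply_le _ _⟩)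
    have hC'nn : 0 ≤ C' := le_trans (norm_nonneg (G hΩ.some)) (hC' hΩ.some)
    have hhb : ∀ ω, ‖hfun ω‖ ≤ C' := by
      intro ω
      have h1 : G ω (e ω) = hfun ω := by rw [hGf]
      calc ‖hfun ω‖ = ‖G ω (e ω)‖ := by rw [h1]
        _ ≤ ‖G ω‖ * ‖e ω‖ := (G ω).le_opNorm _
        _ ≤ C' * 1 := mul_le_mul (hC' ω) (my_norm_le zero_le_one (hele ω))
            (norm_nonneg _) hC'nn
        _ = C' := mul_one C'
    refine ⟨⟨C', fun f => ?_⟩, BoundedContinuousFunction.ofNormedAddCommGroup hfun hcont C' hhb,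
      fun f ω => ?_⟩
    · apply my_norm_le (mul_nonneg hC'nn (norm_nonneg f))
      intro ω
      rw [hmul f ω, norm_mul]
      exact mul_le_mul (hhb ω) (my_norm_apply_le f ω) (norm_nonneg _) hC'nn
    · rw [BoundedContinuousFunction.coe_ofNormedAddCommGroup]
      exact hmul f ω
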